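/- Let C be a non-empty code in H(m,2) with minimum distance δ ≥ 5, and let X ≤ Aut(C) be such that T_C ≤ X and C is (X,2)-neighbour-transitive. Then: the zero vector lies in C and C is an F_2-subspace of V = F_2^m; every element of the stabiliser X_0 of the zero vector in X is a pure coordinate permutation v ↦ v^σ for some σ ∈ Sym(M); the group X_0 acts 2-homogeneously on M (transitively on the unordered pairs of distinct elements of M); C is invariant under X_0; and X = T_C ⋊ X_0, i.e., T_C is normal in X, X = T_C·X_0 and T_C ∩ X_0 = 1. -/

import Mathlib

open Equiv

namespace Paper

/-- A Hamming-graph automorphism of `Fin m → Q` given by entrywise permutations `h`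
and a permutation `σ` of the entries. -/
def IsQAutPair {m : ℕ} {Q : Type*} (g : Perm (Fin m → Q)) (h : Fin m → Perm Q)
    (σ : Perm (Fin m)) : Prop :=
  ∀ α i, g α i = h i (α (σ.symm i))

/-- `g` is an automorphism of the Hamming graph `H(m,q)`. -/
def IsQAut {m : ℕ} {Q : Type*} (g : Perm (Fin m → Q)) : Prop :=
  ∃ h σ, IsQAutPair g h σ

/-- The permutation group `X_i^{Q_i}` induced on the alphabet in entry `i`
by the stabiliser in `X` of the entry `i`. -/
def indQ {m : ℕ} {Q : Type*} (X : Set (Perm (Fin m → Q))) (i : Fin m) : Set (Perm Q) :=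
  {π | ∃ g ∈ X, ∃ h σ, IsQAutPair g h σ ∧ σ i = i ∧ h i = π}

/-- `C_s`, the set of vertices at Hamming distance exactly `s` from the code `C`. -/
def distSet {m : ℕ} {Q : Type*} [DecidableEq Q] (C : Set (Fin m → Q)) (s : ℕ) :
    Set (Fin m → Q) :=
  {v | (∃ c ∈ C, hammingDist v c = s) ∧ ∀ c ∈ C, s ≤ hammingDist v c}

/-- `C` is `(X,s)`-neighbour-transitive: `X` acts transitively on each of
`C = C_0, C_1, …, C_s`. -/
def NbrTrans {m : ℕ} {Q : Type*} [DecidableEq Q] (X : Set (Perm (Fin m → Q)))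
    (C : Set (Fin m → Q)) (s : ℕ) : Prop :=
  ∀ j ≤ s, ∀ u ∈ distSet C j, ∀ v ∈ distSet C j, ∃ g ∈ X, g u = v

/-- `δ` is the minimum distance of the code `C`. -/
def IsMinDist {m : ℕ} {Q : Type*} [DecidableEq Q] (C : Set (Fin m → Q)) (δ : ℕ) : Prop :=
  (∃ u ∈ C, ∃ v ∈ C, u ≠ v ∧ hammingDist u v = δ) ∧
  ∀ u ∈ C, ∀ v ∈ C, u ≠ v → δ ≤ hammingDist u v

/-- The vertex set `V = F_2^m` of the binary Hamming graph `H(m,2)`. -/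
abbrev BV (m : ℕ) : Type := Fin m → ZMod 2

/-- `g` is an automorphism of the binary Hamming graph `H(m,2)`:
`g : v ↦ v^σ + c` for some `σ ∈ Sym(M)` and `c ∈ V`. -/
def IsB2Aut {m : ℕ} (g : Perm (BV m)) : Prop :=
  ∃ (σ : Perm (Fin m)) (c : BV m), ∀ v, g v = (fun i => v (σ.symm i)) + c

/-- The dual of a binary code under the standard inner product. -/
def dualCode {m : ℕ} (D : Set (BV m)) : Set (BV m) :=
  {w | ∀ v ∈ D, (∑ i, v i * w i) = 0}


lemma two_self : ∀ a : ZMod 2, a + a = 0 := by decide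

/-- `e i + e j` as an element of `BV m`. -/
def pv {m : ℕ} (i j : Fin m) : BV m := Pi.single i 1 + Pi.single j 1

lemma pv_apply {m : ℕ} (i j t : Fin m) :
    pv i j t = (if t = i then 1 else 0) + (if t = j then 1 else 0) := by
  simp [pv, Pi.single_apply]

lemma wt_pair {m : ℕ} {i j : Fin m} (h : i ≠ j) :
    hammingDist (pv i j) (0 : BV m) = 2 := by
  unfold hammingDist
  have : ({t | pv i j t ≠ (0 : BV m) t} : Finset (Fin m)) = {i, j} := by
    ext t
    by_cases hti : t = i <;> by_cases htj : t = j <;>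
      simp_all [pv_apply, h]
  rw [this, Finset.card_insert_of_notMem (by simp [h]), Finset.card_singleton]

lemma pair_fun {m : ℕ} (σ : Perm (Fin m)) (i j : Fin m) :
    (fun t => pv i j (σ.symm t)) = pv (σ i) (σ j) := by
  funext t
  rw [pv_apply, pv_apply]
  simp only [Equiv.symm_apply_eq]

lemma pair_eq {m : ℕ} {a b k l : Fin m} (hab : a ≠ b)
    (h : pv a b = pv k l) :
    (a = k ∧ b = l) ∨ (a = l ∧ b = k) := by
  have ha : a = k ∨ a = l := by
    by_contra hc
    push_neg at hc
    have := congrFun h a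
    rw [pv_apply, pv_apply] at this
    simp [hab, hc.1, hc.2] at this
  have hb : b = k ∨ b = l := by
    by_contra hc
    push_neg at hc
    have := congrFun h b
    rw [pv_apply, pv_apply] at this
    simp [hab.symm, hc.1, hc.2] at this
  rcases ha with ha | ha <;> rcases hb with hb | hb
  · exact absurd (ha.trans hb.symm) hab
  · exact Or.inl ⟨ha, hb⟩
  · exact Or.inr ⟨ha, hb⟩
  · exact absurd (ha.trans hb.symm) hab

lemma dist_char2 {m : ℕ} (x y : BV m) :
    hammingDist x y = hammingDist (x + y) (0 : BV m) := by
  unfold hammingDist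
  congr 1
  ext t
  have h : ∀ a b : ZMod 2, (a ≠ b ↔ a + b ≠ 0) := by decide
  simp only [Finset.mem_filter, Pi.add_apply, Pi.zero_apply]
  rw [h]

theorem stmt7 (m : ℕ) (C : Set (BV m)) (hCne : C.Nonempty)
    (hδ : ∀ u ∈ C, ∀ v ∈ C, u ≠ v → 5 ≤ hammingDist u v)
    (X : Subgroup (Perm (BV m)))
    (hXaut : ∀ g ∈ X, IsB2Aut g)
    (hXC : ∀ g ∈ X, g '' C = C)
    (hTC : ∀ c ∈ C, Equiv.addRight c ∈ X)
    (hNT : NbrTrans (X : Set (Perm (BV m))) C 2) :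
    -- `0 ∈ C` and `C` is an `F_2`-subspace of `V`
    ((0 : BV m) ∈ C ∧ ∀ a ∈ C, ∀ b ∈ C, a + b ∈ C) ∧
    -- every element of `X_0` is a pure coordinate permutation
    (∀ g ∈ X, g (0 : BV m) = 0 →
      ∃ σ : Perm (Fin m), ∀ v, g v = fun i => v (σ.symm i)) ∧
    -- `X_0` acts 2-homogeneously on `M`
    (∀ i j k l : Fin m, i ≠ j → k ≠ l → ∃ g ∈ X, g (0 : BV m) = 0 ∧
      ∃ σ : Perm (Fin m), (∀ v, g v = fun i' => v (σ.symm i')) ∧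
        ((σ i = k ∧ σ j = l) ∨ (σ i = l ∧ σ j = k))) ∧
    -- `C` is invariant under `X_0`
    (∀ g ∈ X, g (0 : BV m) = 0 → ∀ c ∈ C, g c ∈ C) ∧
    -- `X = T_C ⋊ X_0`: `T_C` is normal in `X`, `X = T_C · X_0` and `T_C ∩ X_0 = 1`
    (∀ g ∈ X, ∀ c ∈ C, ∃ c' ∈ C, g * Equiv.addRight c * g⁻¹ = Equiv.addRight c') ∧
    (∀ g ∈ X, ∃ c ∈ C, ∃ y ∈ X, y (0 : BV m) = 0 ∧ g = Equiv.addRight c * y) ∧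
    (∀ c ∈ C, (Equiv.addRight c : Perm (BV m)) 0 = 0 → Equiv.addRight c = (1 : Perm (BV m))) := by
  obtain ⟨c0, hc0⟩ := hCne
  have h0C : (0 : BV m) ∈ C := by
    have himg := hXC _ (hTC c0 hc0)
    rw [← himg]
    exact ⟨c0, hc0, funext fun t => two_self (c0 t)⟩
  have haddC : ∀ a ∈ C, ∀ b ∈ C, a + b ∈ C := by
    intro a ha b hb
    have himg := hXC _ (hTC b hb)
    rw [← himg]
    exact ⟨a, ha, rfl⟩
  have hg0C : ∀ g ∈ X, g (0 : BV m) ∈ C := by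
    intro g hg
    rw [← hXC g hg]
    exact ⟨0, h0C, rfl⟩
  have hpure : ∀ g ∈ X, g (0 : BV m) = 0 →
      ∃ σ : Perm (Fin m), ∀ v, g v = fun i => v (σ.symm i) := by
    intro g hg hg0
    obtain ⟨σ, c, hgσ⟩ := hXaut g hg
    have hc : c = 0 := by
      have h := hgσ 0
      rw [hg0] at h
      have : (fun i => (0 : BV m) (σ.symm i)) + c = c := by
        funext t; simp
      rw [this] at h
      exact h.symm
    exact ⟨σ, fun v => by rw [hgσ v, hc, add_zero]⟩
  have hmem : ∀ i j : Fin m, i ≠ j → pv i j ∈ distSet C 2 := by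
    intro i j hij
    refine ⟨⟨0, h0C, wt_pair hij⟩, ?_⟩
    intro c hc
    by_cases h : c = 0
    · subst h
      rw [wt_pair hij]
    · have h5 := hδ c hc 0 h0C h
      have ht := hammingDist_triangle c (pv i j) 0
      rw [wt_pair hij] at ht
      rw [hammingDist_comm]
      omega
  have h2hom : ∀ i j k l : Fin m, i ≠ j → k ≠ l → ∃ g ∈ X, g (0 : BV m) = 0 ∧
      ∃ σ : Perm (Fin m), (∀ v, g v = fun i' => v (σ.symm i')) ∧
        ((σ i = k ∧ σ j = l) ∨ (σ i = l ∧ σ j = k)) := by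
    intro i j k l hij hkl
    obtain ⟨g, hgX, hgu⟩ := hNT 2 le_rfl (pv i j) (hmem i j hij) (pv k l) (hmem k l hkl)
    obtain ⟨σ, b, hgσ⟩ := hXaut g hgX
    have hσij : σ i ≠ σ j := fun h => hij (σ.injective h)
    have hgb : g 0 = b := by
      rw [hgσ 0]
      funext t; simp
    have hbC : b ∈ C := hgb ▸ hg0C g hgX
    have heq : pv (σ i) (σ j) + b = pv k l := by
      rw [← pair_fun σ i j, ← hgu, hgσ (pv i j)]
    have hb0 : b = 0 := by
      by_contra hb
      have h5 := hδ b hbC 0 h0C hb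
      have hd1 : hammingDist b (pv (σ i) (σ j)) = 2 := by
        rw [dist_char2, add_comm, heq, wt_pair hkl]
      have ht := hammingDist_triangle b (pv (σ i) (σ j)) 0
      rw [hd1, wt_pair hσij] at ht
      omega
    rw [hb0, add_zero] at heq
    refine ⟨g, hgX, by rw [hgb, hb0], σ, fun v => by rw [hgσ v, hb0, add_zero], ?_⟩
    exact pair_eq hσij heq
  have hinv : ∀ g ∈ X, g (0 : BV m) = 0 → ∀ c ∈ C, g c ∈ C := by
    intro g hg _ c hc
    rw [← hXC g hg]
    exact ⟨c, hc, rfl⟩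
  have hnorm : ∀ g ∈ X, ∀ c ∈ C,
      ∃ c' ∈ C, g * Equiv.addRight c * g⁻¹ = Equiv.addRight c' := by
    intro g hg c hc
    obtain ⟨σ, b, hgσ⟩ := hXaut g hg
    have hgb : g 0 = b := by
      rw [hgσ 0]; funext t; simp
    have hbC : b ∈ C := hgb ▸ hg0C g hg
    have hgcC : g c ∈ C := by rw [← hXC g hg]; exact ⟨c, hc, rfl⟩
    refine ⟨fun t => c (σ.symm t), ?_, ?_⟩
    · have h3 : (fun t => c (σ.symm t)) = g c + b := by
        rw [hgσ c]
        funext t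
        simp only [Pi.add_apply]
        rw [add_assoc, two_self, add_zero]
      rw [h3]
      exact haddC _ hgcC _ hbC
    · apply Equiv.ext
      intro w
      have hw : g (g⁻¹ w) = w := Equiv.apply_symm_apply g w
      rw [hgσ (g⁻¹ w)] at hw
      set u := g⁻¹ w with hu
      have key : g (u + c) = w + fun t => c (σ.symm t) := by
        rw [hgσ, ← hw]
        funext t
        simp only [Pi.add_apply]
        ring
      simpa [Equiv.Perm.mul_apply, Equiv.coe_addRight, hu, Equiv.Perm.inv_def] using key
  have hfact : ∀ g ∈ X, ∃ c ∈ C, ∃ y ∈ X, y (0 : BV m) = 0 ∧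
      g = Equiv.addRight c * y := by
    intro g hg
    have hbC : g 0 ∈ C := hg0C g hg
    refine ⟨g 0, hbC, (Equiv.addRight (g 0))⁻¹ * g,
      mul_mem (inv_mem (hTC _ hbC)) hg, ?_, (mul_inv_cancel_left _ _).symm⟩
    rw [Equiv.Perm.mul_apply, Equiv.Perm.inv_def, Equiv.symm_apply_eq]
    simp
  refine ⟨⟨h0C, haddC⟩, hpure, h2hom, hinv, hnorm, hfact, ?_⟩
  intro c hc h0
  have hcz : c = 0 := by simpa using h0
  subst hcz
  apply Equiv.ext
  intro x
  simp


end Paper
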